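/- A sequence {a_n} of positive real numbers is summable if and only if there exists a sequence {b_n} of positive reals and an index n_0 such that for all n > n_0, b_n * (a_n / a_{n+1}) - b_{n+1} ≥ 1. -/

import Mathlib

open Finset

/-- Kummer's characterization of summable positive sequences. -/
theorem kummer_characterization (a : ℕ → ℝ) (ha : ∀ n, 0 < a n) :
    Summable a ↔ ∃ (b : ℕ → ℝ) (n₀ : ℕ), (∀ n, 0 < b n) ∧
      ∀ n > n₀, b n * (a n / a (n + 1)) - b (n + 1) ≥ 1 := by
  constructor
  · intro hs
    set T : ℕ → ℝ := fun m => ∑' k, a (k + m) with hT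
    have hsm : ∀ m, Summable (fun k => a (k + m)) := fun m =>
      (summable_nat_add_iff m).2 hs
    have hTpos : ∀ m, 0 < T m := fun m =>
      Summable.tsum_pos (hsm m) (fun i => (ha _).le) 0 (ha _)
    have hrec : ∀ m, T m = a m + T (m + 1) := by
      intro m
      have h0 := Summable.tsum_eq_zero_add (hsm m)
      simp only [zero_add] at h0
      rw [hT]
      simp only
      rw [h0]
      congr 1
      exact tsum_congr fun k => congrArg a (by omega)
    refine ⟨fun n => T (n + 1) / a n, 0, fun n => div_pos (hTpos _) (ha n), ?_⟩
    intro n _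
    have h1 : a n ≠ 0 := (ha n).ne'
    have h2 : a (n + 1) ≠ 0 := (ha (n + 1)).ne'
    have hr : T (n + 1) = a (n + 1) + T (n + 2) := hrec (n + 1)
    have : T (n + 1) / a n * (a n / a (n + 1)) - T (n + 2) / a (n + 1) = 1 := by
      rw [hr]; field_simp; ring
    simp only [ge_iff_le]
    rw [show (n + 1 + 1 : ℕ) = n + 2 by omega] at *
    linarith [this]
  · rintro ⟨b, n₀, hb, hK⟩
    have key : ∀ n, n₀ < n → a (n + 1) ≤ b n * a n - b (n + 1) * a (n + 1) := by
      intro n hn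
      have h := mul_le_mul_of_nonneg_right (hK n hn) (ha (n + 1)).le
      have h2 : a (n + 1) ≠ 0 := (ha (n + 1)).ne'
      have he : b n * (a n / a (n + 1)) * a (n + 1) = b n * a n := by field_simp
      rw [sub_mul, he, one_mul] at h
      linarith
    have bound : ∀ N, ∑ i ∈ range N, a (i + (n₀ + 2)) ≤
        b (n₀ + 1) * a (n₀ + 1) - b (N + n₀ + 1) * a (N + n₀ + 1) := by
      intro N
      induction N with
      | zero => simp
      | succ N ih =>
        rw [Finset.sum_range_succ]
        have hk := key (N + n₀ + 1) (by omega)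
        have e1 : N + n₀ + 1 + 1 = N + n₀ + 2 := by omega
        have e2 : N + (n₀ + 2) = N + n₀ + 2 := by omega
        have e3 : N + 1 + n₀ + 1 = N + n₀ + 2 := by omega
        rw [e1] at hk
        rw [e2, e3]
        linarith
    have hsum : Summable (fun i => a (i + (n₀ + 2))) := by
      apply summable_of_sum_range_le (c := b (n₀ + 1) * a (n₀ + 1))
        (fun i => (ha _).le)
      intro N
      have := bound N
      have hpos : 0 ≤ b (N + n₀ + 1) * a (N + n₀ + 1) :=
        le_of_lt (mul_pos (hb _) (ha _))
      linarith
    exact (summable_nat_add_iff (n₀ + 2)).1 hsum
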